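/- Let R = ∧²V ⊆ V ⊗ V (the alternating tensors), β = 0, and α : ∧²V → V a linear map. Then the Braverman–Gaitsgory conditions (1) im(α⊗id − id⊗α) ⊆ R on (R⊗V)∩(V⊗R), and (2) α∘(α⊗id − id⊗α) = 0, hold if and only if the bracket [x,y] := α(y∧x) satisfies the Jacobi identity, i.e. makes V into a Lie algebra. -/

import Mathlib

open TensorProduct Module

noncomputable section

variable (k : Type) [Field k]
variable (V : Type) [AddCommGroup V] [Module k V]

/-- The subspace `R = ∧²V ⊆ V ⊗ V` of antisymmetric tensors, identified with the span of the
elements `x ⊗ y − y ⊗ x`. -/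
def altTensors : Submodule k (V ⊗[k] V) :=
  Submodule.span k {w | ∃ x y : V, w = x ⊗ₜ[k] y - y ⊗ₜ[k] x}

/-- The image of `R ⊗ V` inside `(V ⊗ V) ⊗ V`. -/
def RtensorV (R : Submodule k (V ⊗[k] V)) : Submodule k ((V ⊗[k] V) ⊗[k] V) :=
  LinearMap.range (TensorProduct.map R.subtype (LinearMap.id (R := k) (M := V)))

/-- The image of `V ⊗ R` inside `(V ⊗ V) ⊗ V` (via the associator). -/
def VtensorR (R : Submodule k (V ⊗[k] V)) : Submodule k ((V ⊗[k] V) ⊗[k] V) :=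
  LinearMap.range (((TensorProduct.assoc k V V V).symm.toLinearMap).comp
    (TensorProduct.map (LinearMap.id (R := k) (M := V)) R.subtype))

/-- The map `α⊗id − id⊗α : V^{⊗3} → V^{⊗2}` for (the extension by zero of) `α`. -/
def bgMap (a : V ⊗[k] V →ₗ[k] V) : (V ⊗[k] V) ⊗[k] V →ₗ[k] V ⊗[k] V :=
  TensorProduct.map a (LinearMap.id (R := k) (M := V))
    - (TensorProduct.map (LinearMap.id (R := k) (M := V)) a).comp
        (TensorProduct.assoc k V V V).toLinearMap

def altA (x y z : V) : (V ⊗[k] V) ⊗[k] V :=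
  ((x ⊗ₜ[k] y) ⊗ₜ[k] z - (y ⊗ₜ[k] x) ⊗ₜ[k] z)
    + ((y ⊗ₜ[k] z) ⊗ₜ[k] x - (z ⊗ₜ[k] y) ⊗ₜ[k] x)
    + ((z ⊗ₜ[k] x) ⊗ₜ[k] y - (x ⊗ₜ[k] z) ⊗ₜ[k] y)

lemma mem_altTensors (x y : V) : x ⊗ₜ[k] y - y ⊗ₜ[k] x ∈ altTensors k V :=
  Submodule.subset_span ⟨x, y, rfl⟩

lemma altA_mem_RtensorV (x y z : V) : altA k V x y z ∈ RtensorV k V (altTensors k V) := by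
  refine ⟨(⟨_, mem_altTensors k V x y⟩ : altTensors k V) ⊗ₜ[k] z
      + (⟨_, mem_altTensors k V y z⟩ : altTensors k V) ⊗ₜ[k] x
      + (⟨_, mem_altTensors k V z x⟩ : altTensors k V) ⊗ₜ[k] y, ?_⟩
  simp [altA, TensorProduct.map_tmul, sub_tmul]

lemma altA_mem_VtensorR (x y z : V) : altA k V x y z ∈ VtensorR k V (altTensors k V) := by
  refine ⟨x ⊗ₜ[k] (⟨_, mem_altTensors k V y z⟩ : altTensors k V)
      + y ⊗ₜ[k] (⟨_, mem_altTensors k V z x⟩ : altTensors k V)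
      + z ⊗ₜ[k] (⟨_, mem_altTensors k V x y⟩ : altTensors k V), ?_⟩
  simp [altA, TensorProduct.map_tmul, tmul_sub, TensorProduct.assoc_symm_tmul]
  abel

lemma comm_altTensors : ∀ v ∈ altTensors k V, (TensorProduct.comm k V V) v = -v := by
  intro v hv
  induction hv using Submodule.span_induction with
  | mem w hw => obtain ⟨x, y, rfl⟩ := hw; simp
  | zero => simp
  | add u w _ _ ihu ihw => simp [map_add, ihu, ihw]; abel
  | smul c u _ ihu => simp [map_smul, ihu]

def sw12 : (V ⊗[k] V) ⊗[k] V →ₗ[k] (V ⊗[k] V) ⊗[k] V :=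
  TensorProduct.map (TensorProduct.comm k V V).toLinearMap (LinearMap.id (R := k) (M := V))

def sw23 : (V ⊗[k] V) ⊗[k] V →ₗ[k] (V ⊗[k] V) ⊗[k] V :=
  ((TensorProduct.assoc k V V V).symm.toLinearMap).comp
    ((TensorProduct.map (LinearMap.id (R := k) (M := V)) (TensorProduct.comm k V V).toLinearMap).comp
      (TensorProduct.assoc k V V V).toLinearMap)

@[simp] lemma sw12_tmul (x y z : V) : sw12 k V ((x ⊗ₜ[k] y) ⊗ₜ[k] z) = (y ⊗ₜ[k] x) ⊗ₜ[k] z := by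
  simp [sw12]

@[simp] lemma sw23_tmul (x y z : V) : sw23 k V ((x ⊗ₜ[k] y) ⊗ₜ[k] z) = (x ⊗ₜ[k] z) ⊗ₜ[k] y := by
  simp [sw23]

lemma sw12_eq_neg (t : (V ⊗[k] V) ⊗[k] V) (ht : t ∈ RtensorV k V (altTensors k V)) :
    sw12 k V t = -t := by
  obtain ⟨s, rfl⟩ := ht
  have h : (sw12 k V).comp (TensorProduct.map (altTensors k V).subtype (LinearMap.id (R := k) (M := V)))
      = -(TensorProduct.map (altTensors k V).subtype (LinearMap.id (R := k) (M := V))) := by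
    apply TensorProduct.ext'
    intro r z
    simp only [LinearMap.comp_apply, TensorProduct.map_tmul, LinearMap.id_coe, id_eq,
      Submodule.coe_subtype, LinearMap.neg_apply, sw12]
    rw [show ((TensorProduct.comm k V V).toLinearMap : V ⊗[k] V →ₗ[k] V ⊗[k] V) (r : V ⊗[k] V) = -(r : V ⊗[k] V) from comm_altTensors k V r r.2]
    simp [neg_tmul]
  calc sw12 k V (TensorProduct.map (altTensors k V).subtype LinearMap.id s)
      = ((sw12 k V).comp (TensorProduct.map (altTensors k V).subtype LinearMap.id)) s := rfl
    _ = -(TensorProduct.map (altTensors k V).subtype LinearMap.id s) := by rw [h]; rfl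

lemma sw23_eq_neg (t : (V ⊗[k] V) ⊗[k] V) (ht : t ∈ VtensorR k V (altTensors k V)) :
    sw23 k V t = -t := by
  obtain ⟨s, rfl⟩ := ht
  have h : (sw23 k V).comp (((TensorProduct.assoc k V V V).symm.toLinearMap).comp
        (TensorProduct.map (LinearMap.id (R := k) (M := V)) (altTensors k V).subtype))
      = -(((TensorProduct.assoc k V V V).symm.toLinearMap).comp
        (TensorProduct.map (LinearMap.id (R := k) (M := V)) (altTensors k V).subtype)) := by
    apply TensorProduct.ext'
    intro v r
    simp only [LinearMap.comp_apply, TensorProduct.map_tmul, LinearMap.id_coe, id_eq,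
      Submodule.coe_subtype, LinearMap.neg_apply, sw23, LinearEquiv.coe_coe]
    rw [LinearEquiv.apply_symm_apply]
    rw [TensorProduct.map_tmul]
    simp only [LinearMap.id_coe, id_eq, LinearEquiv.coe_coe]
    rw [show (TensorProduct.comm k V V) (r : V ⊗[k] V) = -(r : V ⊗[k] V) from comm_altTensors k V r r.2]
    simp [tmul_neg]
  calc sw23 k V _ = ((sw23 k V).comp (((TensorProduct.assoc k V V V).symm.toLinearMap).comp
        (TensorProduct.map (LinearMap.id (R := k) (M := V)) (altTensors k V).subtype))) s := rfl
    _ = _ := by rw [h]; rfl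

set_option maxHeartbeats 1000000 in
lemma inter_le_span (htwo : (2 : k) ≠ 0) :
    ∀ t ∈ RtensorV k V (altTensors k V) ⊓ VtensorR k V (altTensors k V),
      t ∈ Submodule.span k {w : (V ⊗[k] V) ⊗[k] V | ∃ x y z : V, w = altA k V x y z} := by
  classical
  set S := Submodule.span k {w : (V ⊗[k] V) ⊗[k] V | ∃ x y z : V, w = altA k V x y z} with hS
  set b := Basis.ofVectorSpace k V with hb
  set B := (b.tensorProduct b).tensorProduct b with hBdef
  have hBapply : ∀ p q r, B ((p,q),r) = (b p ⊗ₜ[k] b q) ⊗ₜ[k] b r := by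
    intro p q r; simp [hBdef, Basis.tensorProduct_apply]
  have hrepr_tmul : ∀ p q r, B.repr ((b p ⊗ₜ[k] b q) ⊗ₜ[k] b r) = Finsupp.single ((p,q),r) 1 := by
    intro p q r; rw [← hBapply, Basis.repr_self]
  have key12 : ∀ (t : (V ⊗[k] V) ⊗[k] V) i j l,
      B.repr (sw12 k V t) ((i,j),l) = B.repr t ((j,i),l) := by
    intro t i j l
    have h : (Finsupp.lapply (R := k) ((i,j),l)).comp (B.repr.toLinearMap.comp (sw12 k V))
        = (Finsupp.lapply (R := k) ((j,i),l)).comp B.repr.toLinearMap := by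
      apply B.ext
      rintro ⟨⟨p,q⟩,r⟩
      simp only [LinearMap.comp_apply, LinearEquiv.coe_coe, hBapply, sw12_tmul, hrepr_tmul,
        Finsupp.lapply_apply, Finsupp.single_apply, Prod.mk.injEq]
      split_ifs <;> tauto
    exact LinearMap.congr_fun h t
  have key23 : ∀ (t : (V ⊗[k] V) ⊗[k] V) i j l,
      B.repr (sw23 k V t) ((i,j),l) = B.repr t ((i,l),j) := by
    intro t i j l
    have h : (Finsupp.lapply (R := k) ((i,j),l)).comp (B.repr.toLinearMap.comp (sw23 k V))
        = (Finsupp.lapply (R := k) ((i,l),j)).comp B.repr.toLinearMap := by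
      apply B.ext
      rintro ⟨⟨p,q⟩,r⟩
      simp only [LinearMap.comp_apply, LinearEquiv.coe_coe, hBapply, sw23_tmul, hrepr_tmul,
        Finsupp.lapply_apply, Finsupp.single_apply, Prod.mk.injEq]
      split_ifs <;> tauto
    exact LinearMap.congr_fun h t
  have h12 : ∀ (t) (_ : t ∈ RtensorV k V (altTensors k V) ⊓ VtensorR k V (altTensors k V)) i j l,
      B.repr t ((i,j),l) = - B.repr t ((j,i),l) := by
    intro t ht i j l
    have := key12 t i j l
    rw [sw12_eq_neg k V t ht.1] at this
    simp only [map_neg, Finsupp.neg_apply] at this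
    exact neg_eq_iff_eq_neg.mp this
  have h23 : ∀ (t) (_ : t ∈ RtensorV k V (altTensors k V) ⊓ VtensorR k V (altTensors k V)) i j l,
      B.repr t ((i,j),l) = - B.repr t ((i,l),j) := by
    intro t ht i j l
    have := key23 t i j l
    rw [sw23_eq_neg k V t ht.2] at this
    simp only [map_neg, Finsupp.neg_apply] at this
    exact neg_eq_iff_eq_neg.mp this
  have two_ne : ∀ x : k, x = -x → x = 0 := by
    intro x hx
    have h2x : 2 * x = 0 := by
      rw [two_mul]
      nth_rewrite 1 [hx]
      ring
    exact (mul_eq_zero.mp h2x).resolve_left htwo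
  suffices H : ∀ n (t : (V ⊗[k] V) ⊗[k] V),
      t ∈ RtensorV k V (altTensors k V) ⊓ VtensorR k V (altTensors k V) →
      (B.repr t).support.card ≤ n → t ∈ S by
    intro t ht; exact H (B.repr t).support.card t ht le_rfl
  intro n
  induction n with
  | zero =>
    intro t ht hc
    have h0 : B.repr t = 0 :=
      Finsupp.support_eq_empty.mp (Finset.card_eq_zero.mp (Nat.le_zero.mp hc))
    rw [show t = 0 from B.repr.map_eq_zero_iff.mp h0]
    exact zero_mem S
  | succ n IH =>
    intro t ht hc
    by_cases h0 : B.repr t = 0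
    · rw [show t = 0 from B.repr.map_eq_zero_iff.mp h0]
      exact zero_mem S
    · obtain ⟨⟨⟨i,j⟩,l⟩, hp⟩ := Finsupp.support_nonempty_iff.mpr h0
      have hcp : B.repr t ((i,j),l) ≠ 0 := Finsupp.mem_support_iff.mp hp
      have hij : i ≠ j := by
        rintro rfl
        exact hcp (two_ne _ (h12 t ht i i l))
      have hjl : j ≠ l := by
        rintro rfl
        exact hcp (two_ne _ (h23 t ht i j j))
      have h13 : ∀ i' j' l', B.repr t ((i',j'),l') = - B.repr t ((l',j'),i') := by
        intro i' j' l'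
        rw [h12 t ht i' j' l', h23 t ht j' i' l', h12 t ht j' l' i']
        ring
      have hil : i ≠ l := by
        rintro rfl
        exact hcp (two_ne _ (h13 i j i))
      have hA_mem : altA k V (b i) (b j) (b l) ∈
          RtensorV k V (altTensors k V) ⊓ VtensorR k V (altTensors k V) :=
        ⟨altA_mem_RtensorV k V _ _ _, altA_mem_VtensorR k V _ _ _⟩
      set cp := B.repr t ((i,j),l) with hcpdef
      set t' := t - cp • altA k V (b i) (b j) (b l) with ht'def
      have ht' : t' ∈ RtensorV k V (altTensors k V) ⊓ VtensorR k V (altTensors k V) :=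
        sub_mem ht (Submodule.smul_mem _ _ hA_mem)
      have hreprA : B.repr (altA k V (b i) (b j) (b l)) =
          (Finsupp.single ((i,j),l) 1 - Finsupp.single ((j,i),l) 1)
          + (Finsupp.single ((j,l),i) 1 - Finsupp.single ((l,j),i) 1)
          + (Finsupp.single ((l,i),j) 1 - Finsupp.single ((i,l),j) 1) := by
        simp [altA, map_sub, map_add, hrepr_tmul]
      have hd : B.repr t' = B.repr t - cp • B.repr (altA k V (b i) (b j) (b l)) := by
        rw [ht'def, map_sub, map_smul]
      have hdp : B.repr t' ((i,j),l) = 0 := by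
        rw [hd, hreprA]
        simp [Finsupp.single_apply, hij, hjl, hil, Ne.symm hij, Ne.symm hjl, Ne.symm hil]
        exact sub_self _
      have hd1 : B.repr t' ((j,i),l) = 0 := by
        rw [h12 t' ht' j i l, hdp, neg_zero]
      have hd2 : B.repr t' ((i,l),j) = 0 := by
        rw [h23 t' ht' i l j, hdp, neg_zero]
      have hd3 : B.repr t' ((j,l),i) = 0 := by
        rw [h23 t' ht' j l i, hd1, neg_zero]
      have hd4 : B.repr t' ((l,i),j) = 0 := by
        rw [h12 t' ht' l i j, hd2, neg_zero]
      have hd5 : B.repr t' ((l,j),i) = 0 := by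
        rw [h12 t' ht' l j i, hd3, neg_zero]
      have hsupp : (B.repr t').support ⊆ (B.repr t).support.erase ((i,j),l) := by
        intro q hq
        have hdq : B.repr t' q ≠ 0 := Finsupp.mem_support_iff.mp hq
        have hq1 : q ≠ ((i,j),l) := by rintro rfl; exact hdq hdp
        have hq2 : q ≠ ((j,i),l) := by rintro rfl; exact hdq hd1
        have hq3 : q ≠ ((i,l),j) := by rintro rfl; exact hdq hd2
        have hq4 : q ≠ ((j,l),i) := by rintro rfl; exact hdq hd3
        have hq5 : q ≠ ((l,i),j) := by rintro rfl; exact hdq hd4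
        have hq6 : q ≠ ((l,j),i) := by rintro rfl; exact hdq hd5
        have hval : B.repr t' q = B.repr t q := by
          rw [hd, hreprA]
          simp [Finsupp.single_apply, Ne.symm hq1, Ne.symm hq2, Ne.symm hq3,
            Ne.symm hq4, Ne.symm hq5, Ne.symm hq6]
        rw [Finset.mem_erase]
        exact ⟨hq1, Finsupp.mem_support_iff.mpr (hval ▸ hdq)⟩
      have hcard : (B.repr t').support.card ≤ n := by
        have hle := Finset.card_le_card hsupp
        have her := Finset.card_erase_of_mem hp
        have hpos : 1 ≤ (B.repr t).support.card := Finset.card_pos.mpr ⟨_, hp⟩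
        omega
      have hts' := IH t' ht' hcard
      have heq : t = t' + cp • altA k V (b i) (b j) (b l) := by
        rw [ht'def]; abel
      rw [heq]
      exact Submodule.add_mem S hts'
        (Submodule.smul_mem S _ (Submodule.subset_span ⟨b i, b j, b l, rfl⟩))

lemma bgMap_altA (a : V ⊗[k] V →ₗ[k] V) (x y z : V) :
    bgMap k V a (altA k V x y z)
      = ((a (x ⊗ₜ[k] y) - a (y ⊗ₜ[k] x)) ⊗ₜ[k] z - z ⊗ₜ[k] (a (x ⊗ₜ[k] y) - a (y ⊗ₜ[k] x)))
      + ((a (y ⊗ₜ[k] z) - a (z ⊗ₜ[k] y)) ⊗ₜ[k] x - x ⊗ₜ[k] (a (y ⊗ₜ[k] z) - a (z ⊗ₜ[k] y)))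
      + ((a (z ⊗ₜ[k] x) - a (x ⊗ₜ[k] z)) ⊗ₜ[k] y - y ⊗ₜ[k] (a (z ⊗ₜ[k] x) - a (x ⊗ₜ[k] z))) := by
  simp only [bgMap, altA, LinearMap.sub_apply, LinearMap.comp_apply, map_sub, map_add,
    TensorProduct.map_tmul, TensorProduct.assoc_tmul, LinearMap.id_coe, id_eq,
    LinearEquiv.coe_coe, sub_tmul, tmul_sub]
  abel

lemma bgMap_altA_mem (a : V ⊗[k] V →ₗ[k] V) (x y z : V) :
    bgMap k V a (altA k V x y z) ∈ altTensors k V := by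
  rw [bgMap_altA]
  exact add_mem (add_mem (mem_altTensors k V _ _) (mem_altTensors k V _ _)) (mem_altTensors k V _ _)

lemma a_bgMap_altA (a : V ⊗[k] V →ₗ[k] V) (x y z : V) :
    a (bgMap k V a (altA k V x y z)) =
      a (z ⊗ₜ[k] a (y ⊗ₜ[k] x - x ⊗ₜ[k] y) - a (y ⊗ₜ[k] x - x ⊗ₜ[k] y) ⊗ₜ[k] z)
      + a (x ⊗ₜ[k] a (z ⊗ₜ[k] y - y ⊗ₜ[k] z) - a (z ⊗ₜ[k] y - y ⊗ₜ[k] z) ⊗ₜ[k] x)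
      + a (y ⊗ₜ[k] a (x ⊗ₜ[k] z - z ⊗ₜ[k] x) - a (x ⊗ₜ[k] z - z ⊗ₜ[k] x) ⊗ₜ[k] y) := by
  rw [bgMap_altA]
  simp only [map_sub, map_add, sub_tmul, tmul_sub]
  abel

/-- **Braverman–Gaitsgory conditions for `R = ∧²V`, `β = 0`.**  Let `char k ≠ 2`, and let
`a : V ⊗ V → V` be the extension by zero (i.e. antisymmetric: `a (x⊗y) = −a (y⊗x)`) of a
linear map `α : ∧²V → V`.  Then the two conditions
(1) `(α⊗id − id⊗α)` maps `(R⊗V) ∩ (V⊗R)` into `R`, and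
(2) `α ∘ (α⊗id − id⊗α) = 0` on `(R⊗V) ∩ (V⊗R)`,
hold if and only if the bracket `[x,y] := α(y∧x) = a (y⊗x − x⊗y)` satisfies the Jacobi
identity, i.e. makes `V` into a Lie algebra. -/
theorem bg_conditions_iff_jacobi
    (htwo : (2 : k) ≠ 0)
    (a : V ⊗[k] V →ₗ[k] V)
    (ha : ∀ x y : V, a (x ⊗ₜ[k] y) = - a (y ⊗ₜ[k] x)) :
    ((∀ t ∈ RtensorV k V (altTensors k V) ⊓ VtensorR k V (altTensors k V),
        bgMap k V a t ∈ altTensors k V) ∧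
     (∀ t ∈ RtensorV k V (altTensors k V) ⊓ VtensorR k V (altTensors k V),
        a (bgMap k V a t) = 0)) ↔
    (let br : V → V → V := fun x y => a (y ⊗ₜ[k] x - x ⊗ₜ[k] y)
     ∀ x y z : V, br (br x y) z + br (br y z) x + br (br z x) y = 0) := by
  have hmem : ∀ x y z : V, altA k V x y z ∈
      RtensorV k V (altTensors k V) ⊓ VtensorR k V (altTensors k V) :=
    fun x y z => ⟨altA_mem_RtensorV k V x y z, altA_mem_VtensorR k V x y z⟩
  constructor
  · rintro ⟨h1, h2⟩
    intro br x y z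
    have hA := h2 (altA k V x y z) (hmem x y z)
    rw [a_bgMap_altA] at hA
    exact hA
  · intro hJ
    have hJ' : ∀ x y z : V,
        a (z ⊗ₜ[k] a (y ⊗ₜ[k] x - x ⊗ₜ[k] y) - a (y ⊗ₜ[k] x - x ⊗ₜ[k] y) ⊗ₜ[k] z)
        + a (x ⊗ₜ[k] a (z ⊗ₜ[k] y - y ⊗ₜ[k] z) - a (z ⊗ₜ[k] y - y ⊗ₜ[k] z) ⊗ₜ[k] x)
        + a (y ⊗ₜ[k] a (x ⊗ₜ[k] z - z ⊗ₜ[k] x) - a (x ⊗ₜ[k] z - z ⊗ₜ[k] x) ⊗ₜ[k] y) = 0 := hJ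
    constructor
    · intro t ht
      have hts := inter_le_span k V htwo t ht
      have hle : Submodule.span k {w : (V ⊗[k] V) ⊗[k] V | ∃ x y z : V, w = altA k V x y z}
          ≤ Submodule.comap (bgMap k V a) (altTensors k V) := by
        rw [Submodule.span_le]
        rintro w ⟨x, y, z, rfl⟩
        exact bgMap_altA_mem k V a x y z
      exact hle hts
    · intro t ht
      have hts := inter_le_span k V htwo t ht
      have hle : Submodule.span k {w : (V ⊗[k] V) ⊗[k] V | ∃ x y z : V, w = altA k V x y z}
          ≤ LinearMap.ker (a ∘ₗ bgMap k V a) := by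
        rw [Submodule.span_le]
        rintro w ⟨x, y, z, rfl⟩
        simp only [SetLike.mem_coe, LinearMap.mem_ker, LinearMap.comp_apply]
        rw [a_bgMap_altA]
        exact hJ' x y z
      have := hle hts
      simpa using this

end
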